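/- arXiv:quant-ph/0611133 — 5 statements merged into one kernel-verified Lean document; each statement's English description precedes it below -/
import Mathlib

section
/- Let |Ψ⟩ and |Φ⟩ be unit vectors in a complex Hilbert space that are neither parallel nor orthogonal (0 < |⟨Ψ|Φ⟩| < 1). Then there do not exist positive semi-definite operators E_Ψ and E_Φ with E_Ψ + E_Φ ≤ 1 (as operators) such that ⟨Ψ|E_Ψ|Ψ⟩ = 1, ⟨Φ|E_Φ|Φ⟩ = 1, ⟨Ψ|E_Φ|Ψ⟩ = 0 and ⟨Φ|E_Ψ|Φ⟩ = 0. -/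
open Matrix ComplexOrder

/-- Two non-orthogonal, non-parallel unit vectors cannot be perfectly
unambiguously discriminated: there is no pair of positive semi-definite
operators `EΨ`, `EΦ` with `EΨ + EΦ ≤ 1` identifying each state with
certainty and without error. -/
theorem no_perfect_discrimination {n : ℕ}
    {Ψ Φ : Fin n → ℂ}
    (hΨ : star Ψ ⬝ᵥ Ψ = 1) (hΦ : star Φ ⬝ᵥ Φ = 1)
    (hlow : 0 < ‖star Ψ ⬝ᵥ Φ‖)
    (hhigh : ‖star Ψ ⬝ᵥ Φ‖ < 1) :
    ¬ ∃ EΨ EΦ : Matrix (Fin n) (Fin n) ℂ,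
        EΨ.PosSemidef ∧ EΦ.PosSemidef ∧
        ((1 : Matrix (Fin n) (Fin n) ℂ) - (EΨ + EΦ)).PosSemidef ∧
        star Ψ ⬝ᵥ EΨ.mulVec Ψ = 1 ∧
        star Φ ⬝ᵥ EΦ.mulVec Φ = 1 ∧
        star Ψ ⬝ᵥ EΦ.mulVec Ψ = 0 ∧
        star Φ ⬝ᵥ EΨ.mulVec Φ = 0 := by
  rintro ⟨EΨ, EΦ, hP1, hP2, hT, h1, h2, h3, h4⟩
  -- EΦ Ψ = 0
  have hEΦΨ : EΦ *ᵥ Ψ = 0 := (hP2.dotProduct_mulVec_zero_iff Ψ).mp h3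
  -- T Ψ = 0 where T = 1 - (EΨ + EΦ)
  have hTΨ : ((1 : Matrix (Fin n) (Fin n) ℂ) - (EΨ + EΦ)) *ᵥ Ψ = 0 := by
    apply (hT.dotProduct_mulVec_zero_iff Ψ).mp
    simp [sub_mulVec, add_mulVec, dotProduct_sub, dotProduct_add, hΨ, h1, h3]
  -- hence EΨ Ψ = Ψ, so Ψ = EΨ Ψ + EΦ Ψ = EΨ Ψ
  have hΨeq : EΨ *ᵥ Ψ = Ψ := by
    have := hTΨ
    rw [sub_mulVec, one_mulVec, add_mulVec, hEΦΨ, add_zero, sub_eq_zero] at this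
    exact this.symm
  -- ⟨Φ|Ψ⟩ = ⟨Φ|EΨΨ⟩ = ⟨EΨΦ|Ψ⟩ = 0 using hermiticity and h4's consequence
  have hEΨΦ : EΨ *ᵥ Φ = 0 := (hP1.dotProduct_mulVec_zero_iff Φ).mp h4
  have hzero : star Φ ⬝ᵥ Ψ = 0 := by
    have : star Φ ⬝ᵥ EΨ *ᵥ Ψ = 0 := by
      rw [dotProduct_mulVec, ← hP1.1, vecMul_conjTranspose]
      simp [star_star, hEΨΦ]
    rwa [hΨeq] at this
  have : star Ψ ⬝ᵥ Φ = 0 := by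
    have := congrArg star hzero
    rwa [star_dotProduct, star_star, star_zero] at this
  rw [this] at hlow
  simp at hlow
end

section
/- Let ρ_0 and ρ_1 be positive semi-definite operators on a finite-dimensional Hilbert space H whose ranges satisfy range(ρ_0) ∩ range(ρ_1) = {0} and range(ρ_0) + range(ρ_1) = H. Let Σ = ρ_0 + ρ_1, which is invertible. Then ρ_0 Σ^{-1} ρ_1 = 0 and ρ_i Σ^{-1} ρ_i = ρ_i for i = 0, 1. -/
open Matrix ComplexOrder

/-- If the ranges of positive semi-definite `ρ₀`, `ρ₁` intersect trivially and
together span the whole space, then `Σ = ρ₀ + ρ₁` is invertible,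
`ρ₀ Σ⁻¹ ρ₁ = 0` and `ρᵢ Σ⁻¹ ρᵢ = ρᵢ`. -/
theorem parallel_addition_zero {n : ℕ}
    {ρ₀ ρ₁ : Matrix (Fin n) (Fin n) ℂ}
    (h₀ : ρ₀.PosSemidef) (h₁ : ρ₁.PosSemidef)
    (hinf : LinearMap.range ρ₀.mulVecLin ⊓ LinearMap.range ρ₁.mulVecLin = ⊥)
    (hsup : LinearMap.range ρ₀.mulVecLin ⊔ LinearMap.range ρ₁.mulVecLin = ⊤) :
    IsUnit (ρ₀ + ρ₁) ∧
    ρ₀ * (ρ₀ + ρ₁)⁻¹ * ρ₁ = 0 ∧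
    ρ₀ * (ρ₀ + ρ₁)⁻¹ * ρ₀ = ρ₀ ∧
    ρ₁ * (ρ₀ + ρ₁)⁻¹ * ρ₁ = ρ₁ := by
  set S := ρ₀ + ρ₁ with hS
  -- S is injective as a linear map
  have hker : ∀ x : Fin n → ℂ, S *ᵥ x = 0 → x = 0 := by
    intro x hx
    have hadd : star x ⬝ᵥ ρ₀ *ᵥ x + star x ⬝ᵥ ρ₁ *ᵥ x = 0 := by
      have : star x ⬝ᵥ S *ᵥ x = 0 := by rw [hx, dotProduct_zero]
      simpa [hS, add_mulVec, dotProduct_add] using this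
    have e₀ : star x ⬝ᵥ ρ₀ *ᵥ x = 0 ∧ star x ⬝ᵥ ρ₁ *ᵥ x = 0 :=
      (add_eq_zero_iff_of_nonneg (h₀.dotProduct_mulVec_nonneg x) (h₁.dotProduct_mulVec_nonneg x)).mp hadd
    have hρ₀x : ρ₀ *ᵥ x = 0 := (h₀.dotProduct_mulVec_zero_iff x).mp e₀.1
    have hρ₁x : ρ₁ *ᵥ x = 0 := (h₁.dotProduct_mulVec_zero_iff x).mp e₀.2
    -- x is orthogonal to everything
    have horth : ∀ v : Fin n → ℂ, star x ⬝ᵥ v = 0 := by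
      intro v
      have hv : v ∈ LinearMap.range ρ₀.mulVecLin ⊔ LinearMap.range ρ₁.mulVecLin := by
        rw [hsup]; trivial
      obtain ⟨a, ⟨u, hu⟩, b, ⟨w, hw⟩, rfl⟩ := Submodule.mem_sup.mp hv
      have key : ∀ (ρ : Matrix (Fin n) (Fin n) ℂ), ρ.IsHermitian → ρ *ᵥ x = 0 →
          ∀ y, star x ⬝ᵥ ρ *ᵥ y = 0 := by
        intro ρ hherm hzero y
        rw [dotProduct_mulVec]
        have : star x ᵥ* ρ = 0 := by
          have := congrArg star hzero
          rwa [star_mulVec, hherm.eq, star_zero] at this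
        rw [this, zero_dotProduct]
      have ha : star x ⬝ᵥ a = 0 := by
        rw [← hu, mulVecLin_apply]; exact key ρ₀ h₀.1 hρ₀x u
      have hb : star x ⬝ᵥ b = 0 := by
        rw [← hw, mulVecLin_apply]; exact key ρ₁ h₁.1 hρ₁x w
      rw [dotProduct_add, ha, hb, add_zero]
    exact dotProduct_star_self_eq_zero.mp (horth x)
  have hinj : Function.Injective S.mulVec := by
    intro a b hab
    have : S *ᵥ (a - b) = 0 := by rw [mulVec_sub, hab, sub_self]
    exact sub_eq_zero.mp (hker _ this)
  have hunit : IsUnit S := mulVec_injective_iff_isUnit.mp hinj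
  have hdet : IsUnit S.det := (isUnit_iff_isUnit_det S).mp hunit
  have hSinv : S * S⁻¹ = 1 := mul_nonsing_inv S hdet
  -- Key: ρ₀ S⁻¹ ρ₁ = ρ₁ - ρ₁ S⁻¹ ρ₁  (so its range lies in range ρ₁)
  have hkey : ρ₀ * S⁻¹ * ρ₁ = ρ₁ - ρ₁ * S⁻¹ * ρ₁ := by
    have : ρ₀ = S - ρ₁ := by rw [hS, add_sub_cancel_right]
    rw [this, sub_mul, sub_mul, hSinv, one_mul]
  have hzero : ρ₀ * S⁻¹ * ρ₁ = 0 := by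
    have hAv : ∀ x : Fin n → ℂ, (ρ₀ * S⁻¹ * ρ₁) *ᵥ x = 0 := by
      intro x
      have hmem : (ρ₀ * S⁻¹ * ρ₁) *ᵥ x ∈
          LinearMap.range ρ₀.mulVecLin ⊓ LinearMap.range ρ₁.mulVecLin := by
        constructor
        · exact ⟨(S⁻¹ * ρ₁) *ᵥ x, by rw [mulVecLin_apply, mulVec_mulVec, Matrix.mul_assoc]⟩
        · refine ⟨x - (S⁻¹ * ρ₁) *ᵥ x, ?_⟩
          rw [mulVecLin_apply, mulVec_sub, hkey, sub_mulVec, mulVec_mulVec, Matrix.mul_assoc]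
      rw [hinf] at hmem
      exact hmem
    ext i j
    have := congrFun (hAv (Pi.single j 1)) i
    simpa [mulVec_single] using this
  refine ⟨hunit, hzero, ?_, ?_⟩
  · calc ρ₀ * S⁻¹ * ρ₀ = ρ₀ * S⁻¹ * (S - ρ₁) := by rw [hS, add_sub_cancel_right]
    _ = ρ₀ * (S⁻¹ * S) - ρ₀ * S⁻¹ * ρ₁ := by
        rw [mul_sub, Matrix.mul_assoc]
    _ = ρ₀ := by rw [nonsing_inv_mul S hdet, hzero, Matrix.mul_one, sub_zero]
  · calc ρ₁ * S⁻¹ * ρ₁ = (S - ρ₀) * S⁻¹ * ρ₁ := by rw [hS, add_sub_cancel_left]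
    _ = S * S⁻¹ * ρ₁ - ρ₀ * S⁻¹ * ρ₁ := by rw [sub_mul, sub_mul]
    _ = ρ₁ := by rw [hSinv, hzero, Matrix.one_mul, sub_zero]
end

section
/- Let ρ_0 and ρ_1 be positive semi-definite operators on a finite-dimensional Hilbert space H with range(ρ_0) ∩ range(ρ_1) = {0} and range(ρ_0) + range(ρ_1) = H, and let Σ = ρ_0 + ρ_1. Then for i = 0,1, the operator P_i := √ρ_i Σ^{-1} √ρ_i is the orthogonal projection onto the range of ρ_i. -/
open Matrix ComplexOrder

/-- The positive semidefinite square root of a positive semidefinite matrix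
(the definition removed from Mathlib, restored with its old meaning). -/
noncomputable def Matrix.PosSemidef.sqrt {n : Type*} [Fintype n] [DecidableEq n]
    {𝕜 : Type*} [RCLike 𝕜] {A : Matrix n n 𝕜} (hA : A.PosSemidef) : Matrix n n 𝕜 :=
  hA.1.eigenvectorUnitary.1 * diagonal ((↑) ∘ (fun x => Real.sqrt x) ∘ hA.1.eigenvalues) *
    (star hA.1.eigenvectorUnitary : Matrix n n 𝕜)

lemma Matrix.PosSemidef.posSemidef_sqrt {n : ℕ} {A : Matrix (Fin n) (Fin n) ℂ}
    (hA : A.PosSemidef) : hA.sqrt.PosSemidef := by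
  have hD : (diagonal ((↑) ∘ (fun x => Real.sqrt x) ∘ hA.1.eigenvalues) :
      Matrix (Fin n) (Fin n) ℂ).PosSemidef := by
    rw [posSemidef_diagonal_iff]
    intro i
    simp only [Function.comp_apply, Complex.zero_le_real]
    exact Real.sqrt_nonneg _
  have := hD.mul_mul_conjTranspose_same (hA.1.eigenvectorUnitary.1)
  unfold Matrix.PosSemidef.sqrt
  exact this

lemma Matrix.PosSemidef.sqrt_mul_self {n : ℕ} {A : Matrix (Fin n) (Fin n) ℂ}
    (hA : A.PosSemidef) : hA.sqrt * hA.sqrt = A := by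
  conv_rhs => rw [hA.1.spectral_theorem, Unitary.conjStarAlgAut_apply]
  unfold Matrix.PosSemidef.sqrt
  have hU : (star hA.1.eigenvectorUnitary : Matrix (Fin n) (Fin n) ℂ) *
      hA.1.eigenvectorUnitary.1 = 1 := Unitary.coe_star_mul_self _
  have hd : diagonal ((↑) ∘ (fun x => Real.sqrt x) ∘ hA.1.eigenvalues) *
      diagonal ((↑) ∘ (fun x => Real.sqrt x) ∘ hA.1.eigenvalues) =
      (diagonal (RCLike.ofReal ∘ hA.1.eigenvalues) : Matrix (Fin n) (Fin n) ℂ) := by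
    rw [diagonal_mul_diagonal]
    congr 1
    funext i
    simp only [Function.comp_apply]
    rw [← Complex.ofReal_mul, Real.mul_self_sqrt (hA.eigenvalues_nonneg i)]
    rfl
  calc _ = hA.1.eigenvectorUnitary.1 * diagonal ((↑) ∘ (fun x => Real.sqrt x) ∘ hA.1.eigenvalues) *
      ((star hA.1.eigenvectorUnitary : Matrix (Fin n) (Fin n) ℂ) * hA.1.eigenvectorUnitary.1) *
      diagonal ((↑) ∘ (fun x => Real.sqrt x) ∘ hA.1.eigenvalues) *
      (star hA.1.eigenvectorUnitary : Matrix (Fin n) (Fin n) ℂ) := by simp only [Matrix.mul_assoc]; rfl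
    _ = _ := by rw [hU, Matrix.mul_one, Matrix.mul_assoc _ (diagonal _) (diagonal _), hd]

private lemma ext_mulVec' {n : ℕ} {A B : Matrix (Fin n) (Fin n) ℂ}
    (h : ∀ v, A *ᵥ v = B *ᵥ v) : A = B := by
  ext i j
  have := congrFun (h (Pi.single j 1)) i
  simpa using this

private lemma range_sqrt' {n : ℕ} {A : Matrix (Fin n) (Fin n) ℂ} (hA : A.PosSemidef) :
    LinearMap.range hA.sqrt.mulVecLin = LinearMap.range A.mulVecLin := by
  have hle : LinearMap.range A.mulVecLin ≤ LinearMap.range hA.sqrt.mulVecLin := by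
    rintro _ ⟨x, rfl⟩
    refine ⟨hA.sqrt *ᵥ x, ?_⟩
    simp only [Matrix.mulVecLin_apply, Matrix.mulVec_mulVec, hA.sqrt_mul_self]
  refine (Submodule.eq_of_le_of_finrank_le hle ?_).symm
  have h1 : (hA.sqrtᴴ * hA.sqrt).rank = hA.sqrt.rank := rank_conjTranspose_mul_self _
  rw [hA.posSemidef_sqrt.1.eq, hA.sqrt_mul_self] at h1
  simpa [Matrix.rank] using h1.ge

private lemma sum_isUnit' {n : ℕ} {A B : Matrix (Fin n) (Fin n) ℂ}
    (hA : A.PosSemidef) (hB : B.PosSemidef)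
    (hsup : LinearMap.range A.mulVecLin ⊔ LinearMap.range B.mulVecLin = ⊤) :
    IsUnit (A + B) := by
  rw [← Matrix.mulVec_injective_iff_isUnit]
  have hker : ∀ x, (A + B) *ᵥ x = 0 → x = 0 := by
    intro x hx
    have h0 : star x ⬝ᵥ A *ᵥ x + star x ⬝ᵥ B *ᵥ x = 0 := by
      rw [← dotProduct_add, ← Matrix.add_mulVec, hx, dotProduct_zero]
    obtain ⟨hA0', hB0'⟩ := (add_eq_zero_iff_of_nonneg (hA.dotProduct_mulVec_nonneg x) (hB.dotProduct_mulVec_nonneg x)).mp h0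
    have hA0 : A *ᵥ x = 0 := (hA.dotProduct_mulVec_zero_iff x).mp hA0'
    have hB0 : B *ᵥ x = 0 := (hB.dotProduct_mulVec_zero_iff x).mp hB0'
    have horth : ∀ (M : Matrix (Fin n) (Fin n) ℂ), M.IsHermitian → M *ᵥ x = 0 →
        ∀ v ∈ LinearMap.range M.mulVecLin, star x ⬝ᵥ v = 0 := by
      rintro M hM hMx _ ⟨y, rfl⟩
      have hsx : star x ᵥ* M = 0 := by
        have := star_mulVec (M := M) (v := x)
        rw [hMx, hM.eq] at this
        simpa using this.symm
      rw [Matrix.mulVecLin_apply, dotProduct_mulVec, hsx, zero_dotProduct]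
    have hxtop : x ∈ (⊤ : Submodule ℂ (Fin n → ℂ)) := trivial
    rw [← hsup] at hxtop
    obtain ⟨a, ha, b, hb, hab⟩ := Submodule.mem_sup.mp hxtop
    have hx0 : star x ⬝ᵥ x = 0 := by
      rw [← hab, dotProduct_add, hab, horth A hA.1 hA0 a ha, horth B hB.1 hB0 b hb, add_zero]
    exact dotProduct_star_self_eq_zero.mp hx0
  intro x y hxy
  have : (A + B) *ᵥ (x - y) = 0 := by rw [Matrix.mulVec_sub, hxy, sub_self]
  exact sub_eq_zero.mp (hker _ this)

private lemma proj_aux' {n : ℕ} {A B : Matrix (Fin n) (Fin n) ℂ}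
    (hA : A.PosSemidef) (hB : B.PosSemidef)
    (hinf : LinearMap.range A.mulVecLin ⊓ LinearMap.range B.mulVecLin = ⊥)
    (hu : IsUnit (A + B))
    {P : Matrix (Fin n) (Fin n) ℂ}
    (hP : P = hA.sqrt * (A + B)⁻¹ * hA.sqrt) :
    P * P = P ∧ Pᴴ = P ∧
      LinearMap.range P.mulVecLin = LinearMap.range A.mulVecLin := by
  have hdet : IsUnit (A + B).det := (Matrix.isUnit_iff_isUnit_det _).mp hu
  have hmul : (A + B) * (A + B)⁻¹ = 1 := Matrix.mul_nonsing_inv _ hdet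
  have hSH : (A + B)ᴴ = A + B := (hA.1.add hB.1).eq
  have hinvH : ((A + B)⁻¹)ᴴ = (A + B)⁻¹ := by
    rw [Matrix.conjTranspose_nonsing_inv, hSH]
  -- key: Sigma inverse maps range A by inverse of identity on it
  have key : ∀ v ∈ LinearMap.range A.mulVecLin, A *ᵥ ((A + B)⁻¹ *ᵥ v) = v := by
    intro v hv
    set y := (A + B)⁻¹ *ᵥ v with hy
    have hSy : A *ᵥ y + B *ᵥ y = v := by
      rw [← Matrix.add_mulVec, hy, Matrix.mulVec_mulVec, hmul, Matrix.one_mulVec]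
    have hBy : B *ᵥ y ∈ LinearMap.range A.mulVecLin ⊓ LinearMap.range B.mulVecLin := by
      rw [Submodule.mem_inf]
      refine ⟨?_, ⟨y, rfl⟩⟩
      have hBv : B *ᵥ y = v - A *ᵥ y := by rw [← hSy]; abel
      rw [hBv]
      exact Submodule.sub_mem _ hv ⟨y, rfl⟩
    rw [hinf, Submodule.mem_bot] at hBy
    rw [← hSy, hBy, add_zero]
  have E1 : A * ((A + B)⁻¹ * hA.sqrt) = hA.sqrt := by
    apply ext_mulVec'
    intro v
    have hv : hA.sqrt *ᵥ v ∈ LinearMap.range A.mulVecLin := by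
      rw [← range_sqrt' hA]; exact ⟨v, rfl⟩
    have := key _ hv
    rw [← Matrix.mulVec_mulVec, ← Matrix.mulVec_mulVec]
    exact this
  have E2 : hA.sqrt * ((A + B)⁻¹ * A) = hA.sqrt := by
    have h := congrArg conjTranspose E1
    rw [conjTranspose_mul, conjTranspose_mul, hinvH, hA.1.eq, hA.posSemidef_sqrt.1.eq] at h
    rwa [Matrix.mul_assoc] at h
  rw [hP]
  refine ⟨?_, ?_, ?_⟩
  · calc hA.sqrt * (A + B)⁻¹ * hA.sqrt * (hA.sqrt * (A + B)⁻¹ * hA.sqrt)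
        = hA.sqrt * (A + B)⁻¹ * (hA.sqrt * hA.sqrt * ((A + B)⁻¹ * hA.sqrt)) := by
          simp only [Matrix.mul_assoc]
      _ = hA.sqrt * (A + B)⁻¹ * (A * ((A + B)⁻¹ * hA.sqrt)) := by
          rw [hA.sqrt_mul_self]
      _ = hA.sqrt * (A + B)⁻¹ * hA.sqrt := by rw [E1]
  · rw [conjTranspose_mul, conjTranspose_mul, hinvH, hA.posSemidef_sqrt.1.eq,
      Matrix.mul_assoc]
  · have hPs : hA.sqrt * (A + B)⁻¹ * hA.sqrt * hA.sqrt = hA.sqrt := by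
      calc hA.sqrt * (A + B)⁻¹ * hA.sqrt * hA.sqrt
          = hA.sqrt * ((A + B)⁻¹ * (hA.sqrt * hA.sqrt)) := by simp only [Matrix.mul_assoc]
        _ = hA.sqrt * ((A + B)⁻¹ * A) := by rw [hA.sqrt_mul_self]
        _ = hA.sqrt := E2
    apply le_antisymm
    · rw [Matrix.mul_assoc, Matrix.mulVecLin_mul, ← range_sqrt' hA]
      exact LinearMap.range_comp_le_range _ _
    · rw [← range_sqrt' hA]
      rintro _ ⟨x, rfl⟩
      refine ⟨hA.sqrt *ᵥ x, ?_⟩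
      simp only [Matrix.mulVecLin_apply, Matrix.mulVec_mulVec, hPs]

/-- Under trivial intersection and spanning of the ranges,
`Pᵢ := √ρᵢ Σ⁻¹ √ρᵢ` (with `Σ = ρ₀ + ρ₁`) is the orthogonal projection onto
the range of `ρᵢ`, for `i = 0, 1`: it is idempotent, Hermitian, and its
range is the range of `ρᵢ`. -/
theorem sqrt_inv_sqrt_is_proj {n : ℕ}
    {ρ₀ ρ₁ : Matrix (Fin n) (Fin n) ℂ}
    (h₀ : ρ₀.PosSemidef) (h₁ : ρ₁.PosSemidef)
    (hinf : LinearMap.range ρ₀.mulVecLin ⊓ LinearMap.range ρ₁.mulVecLin = ⊥)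
    (hsup : LinearMap.range ρ₀.mulVecLin ⊔ LinearMap.range ρ₁.mulVecLin = ⊤)
    {P₀ P₁ : Matrix (Fin n) (Fin n) ℂ}
    (hP₀ : P₀ = h₀.sqrt * (ρ₀ + ρ₁)⁻¹ * h₀.sqrt)
    (hP₁ : P₁ = h₁.sqrt * (ρ₀ + ρ₁)⁻¹ * h₁.sqrt) :
    (P₀ * P₀ = P₀ ∧ P₀ᴴ = P₀ ∧
      LinearMap.range P₀.mulVecLin = LinearMap.range ρ₀.mulVecLin) ∧
    (P₁ * P₁ = P₁ ∧ P₁ᴴ = P₁ ∧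
      LinearMap.range P₁.mulVecLin = LinearMap.range ρ₁.mulVecLin) := by
  have hu : IsUnit (ρ₀ + ρ₁) := sum_isUnit' h₀ h₁ hsup
  have hu' : IsUnit (ρ₁ + ρ₀) := by rwa [add_comm]
  refine ⟨proj_aux' h₀ h₁ hinf hu hP₀, proj_aux' h₁ h₀ ?_ hu' ?_⟩
  · rwa [inf_comm]
  · rwa [add_comm ρ₁ ρ₀]
end

section
/- Let A and B be positive semi-definite n×n matrices and let (A+B)^{-1} denote the Moore–Penrose pseudo-inverse of A+B. Then the parallel addition A : B := A (A+B)^{-1} B is Hermitian and its range equals range(A) ∩ range(B). -/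
open Matrix ComplexOrder

/-- `X` satisfies the Moore–Penrose conditions for `M`. -/
def IsMoorePenroseInv {n : ℕ} (M X : Matrix (Fin n) (Fin n) ℂ) : Prop :=
  M * X * M = M ∧ X * M * X = X ∧ (M * X)ᴴ = M * X ∧ (X * M)ᴴ = X * M

lemma mat_ext_mulVec {n : ℕ} {C D : Matrix (Fin n) (Fin n) ℂ}
    (h : ∀ v, C *ᵥ v = D *ᵥ v) : C = D := by
  have : Matrix.toLin' C = Matrix.toLin' D := LinearMap.ext (by simpa [Matrix.toLin'_apply] using h)
  exact Matrix.toLin'.injective this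

/-- For positive semi-definite `A`, `B` and `X` the Moore–Penrose
pseudo-inverse of `A + B`, the parallel addition `A : B = A X B` is Hermitian
and its range is `range A ∩ range B`. -/
theorem parallel_addition_hermitian_range {n : ℕ}
    {A B X : Matrix (Fin n) (Fin n) ℂ}
    (hA : A.PosSemidef) (hB : B.PosSemidef)
    (hX : IsMoorePenroseInv (A + B) X) :
    (A * X * B)ᴴ = A * X * B ∧
    LinearMap.range (A * X * B).mulVecLin =
      LinearMap.range A.mulVecLin ⊓ LinearMap.range B.mulVecLin := by
  obtain ⟨h1, h2, h3, h4⟩ := hX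
  set M := A + B with hMdef
  have hAH : Aᴴ = A := hA.1
  have hBH : Bᴴ = B := hB.1
  have hM : Mᴴ = M := by rw [hMdef, conjTranspose_add, hAH, hBH]
  have c3 : M * X = Xᴴ * M := by
    conv_lhs => rw [← h3]
    rw [conjTranspose_mul, hM]
  have c4 : X * M = M * Xᴴ := by
    conv_lhs => rw [← h4]
    rw [conjTranspose_mul, hM]
  have r1 : X = X * Xᴴ * M := by
    calc X = X * M * X := h2.symm
    _ = X * (M * X) := mul_assoc _ _ _
    _ = X * (Xᴴ * M) := by rw [c3]
    _ = X * Xᴴ * M := (mul_assoc _ _ _).symm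
  have key : X = X * M * Xᴴ := by
    calc X = X * Xᴴ * M := r1
    _ = X * Xᴴ * (M * X * M) := by rw [h1]
    _ = (X * Xᴴ * M) * (X * M) := by simp only [mul_assoc]
    _ = X * (X * M) := by rw [← r1]
    _ = X * (M * Xᴴ) := by rw [c4]
    _ = X * M * Xᴴ := (mul_assoc _ _ _).symm
  have hXH : Xᴴ = X := by
    conv_lhs => rw [key]
    conv_rhs => rw [key]
    rw [conjTranspose_mul, conjTranspose_mul, conjTranspose_conjTranspose, hM, mul_assoc]
  -- kernel of M is contained in kernels of A and B
  have hker : ∀ v, M *ᵥ v = 0 → A *ᵥ v = 0 ∧ B *ᵥ v = 0 := by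
    intro v hv
    have h0 : star v ⬝ᵥ A *ᵥ v + star v ⬝ᵥ B *ᵥ v = 0 := by
      have := congrArg (fun w => star v ⬝ᵥ w) hv
      simpa [hMdef, add_mulVec, dotProduct_add] using this
    obtain ⟨ha, hb⟩ := (add_eq_zero_iff_of_nonneg (hA.dotProduct_mulVec_nonneg v) (hB.dotProduct_mulVec_nonneg v)).mp h0
    exact ⟨(hA.dotProduct_mulVec_zero_iff v).mp ha, (hB.dotProduct_mulVec_zero_iff v).mp hb⟩
  have hAQ : A * (X * M) = A := by
    apply mat_ext_mulVec
    intro v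
    have hm : M *ᵥ ((X * M) *ᵥ v - v) = 0 := by
      rw [mulVec_sub, mulVec_mulVec, ← Matrix.mul_assoc, h1, sub_self]
    have := (hker _ hm).1
    rw [mulVec_sub, sub_eq_zero] at this
    rwa [mulVec_mulVec] at this
  have hBQ : B * (X * M) = B := by
    apply mat_ext_mulVec
    intro v
    have hm : M *ᵥ ((X * M) *ᵥ v - v) = 0 := by
      rw [mulVec_sub, mulVec_mulVec, ← Matrix.mul_assoc, h1, sub_self]
    have := (hker _ hm).2
    rw [mulVec_sub, sub_eq_zero] at this
    rwa [mulVec_mulVec] at this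
  have hQA : M * X * A = A := by
    have := congrArg conjTranspose hAQ
    rwa [conjTranspose_mul, conjTranspose_mul, hXH, hM, hAH] at this
  have hQB : M * X * B = B := by
    have := congrArg conjTranspose hBQ
    rwa [conjTranspose_mul, conjTranspose_mul, hXH, hM, hBH] at this
  have hT1 : A * X * A + A * X * B = A := by
    have h : A * X * (A + B) = A := by rw [mul_assoc, ← hMdef]; exact hAQ
    rwa [mul_add] at h
  have hT2 : A * X * A + B * X * A = A := by
    have h : (A + B) * X * A = A := by rw [← hMdef]; exact hQA
    rwa [add_mul, add_mul] at h
  have hsymm : A * X * B = B * X * A := add_left_cancel (hT1.trans hT2.symm)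
  have herm : (A * X * B)ᴴ = A * X * B := by
    rw [conjTranspose_mul, conjTranspose_mul, hXH, hAH, hBH, ← mul_assoc, ← hsymm]
  refine ⟨herm, le_antisymm (le_inf ?_ ?_) ?_⟩
  · rintro x ⟨v, rfl⟩
    exact ⟨(X * B) *ᵥ v, by simp [mulVecLin_apply, mulVec_mulVec, Matrix.mul_assoc]⟩
  · rintro x ⟨v, rfl⟩
    refine ⟨(X * A) *ᵥ v, ?_⟩
    simp only [mulVecLin_apply, mulVec_mulVec]
    rw [← Matrix.mul_assoc, ← hsymm]
  · rintro x ⟨⟨u, hu⟩, ⟨v, hv⟩⟩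
    refine ⟨u + v, ?_⟩
    simp only [mulVecLin_apply] at hu hv ⊢
    have hkey : (A * X * B) *ᵥ (u + v) = (B * X) *ᵥ x + (A * X) *ᵥ x := by
      rw [mulVec_add]
      congr 1
      · rw [hsymm, Matrix.mul_assoc, ← mulVec_mulVec, ← mulVec_mulVec, hu, mulVec_mulVec]
      · rw [Matrix.mul_assoc, ← mulVec_mulVec, ← mulVec_mulVec, hv, mulVec_mulVec]
    rw [hkey, ← add_mulVec, ← add_mul, add_comm B A, ← hMdef, ← hu,
      mulVec_mulVec, hQA, hu]
end

section
/- Let {E_0, E_1, E_?} be positive semi-definite operators on a finite-dimensional Hilbert space with E_0 + E_1 + E_? = 1, where E_0 = x|x⟩⟨x| and E_1 = y|y⟩⟨y| are rank-one with x, y > 0 and unit vectors |x⟩, |y⟩, and suppose rank(E_?) ≤ dim H − 2. Then x = y = 1, ⟨x|y⟩ = 0, and E_? is the orthogonal projection onto the orthogonal complement of span{|x⟩, |y⟩}. -/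
open Matrix ComplexOrder

private lemma vmv_mulVec {n : ℕ} (a b v : Fin n → ℂ) :
    vecMulVec a b *ᵥ v = (b ⬝ᵥ v) • a := by
  ext i
  simp only [mulVec, vecMulVec_apply, dotProduct, Pi.smul_apply, smul_eq_mul,
    Finset.sum_mul]
  apply Finset.sum_congr rfl
  intros; ring

private lemma vmv_mul_vmv {n : ℕ} (a b c d : Fin n → ℂ) :
    vecMulVec a b * vecMulVec c d = (b ⬝ᵥ c) • vecMulVec a d := by
  ext i j
  simp only [mul_apply, vecMulVec_apply, Matrix.smul_apply, dotProduct, smul_eq_mul,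
    Finset.sum_mul]
  apply Finset.sum_congr rfl
  intros; ring

/-- If `{E₀, E₁, E?}` is a POVM with `E₀ = x|x⟩⟨x|`, `E₁ = y|y⟩⟨y|` rank one
(`x, y > 0`, unit vectors) and `rank E? ≤ dim H - 2`, then `x = y = 1`,
`⟨x|y⟩ = 0`, and `E?` is the orthogonal projection onto the orthogonal
complement of `span {|x⟩, |y⟩}`. -/
theorem povm_rank_one_forces_projective {n : ℕ} (hn : 2 ≤ n)
    {E₀ E₁ Eq : Matrix (Fin n) (Fin n) ℂ}
    {x y : ℝ} (hx : 0 < x) (hy : 0 < y)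
    {xv yv : Fin n → ℂ}
    (hxv : star xv ⬝ᵥ xv = 1) (hyv : star yv ⬝ᵥ yv = 1)
    (hE₀ : E₀ = (x : ℂ) • vecMulVec xv (star xv))
    (hE₁ : E₁ = (y : ℂ) • vecMulVec yv (star yv))
    (hEq : Eq.PosSemidef)
    (hsum : E₀ + E₁ + Eq = 1)
    (hrank : Eq.rank ≤ n - 2) :
    x = 1 ∧ y = 1 ∧ star xv ⬝ᵥ yv = 0 ∧
    Eq * Eq = Eq ∧ Eqᴴ = Eq ∧
    (LinearMap.range Eq.mulVecLin : Set (Fin n → ℂ)) =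
      {v : Fin n → ℂ | star xv ⬝ᵥ v = 0 ∧ star yv ⬝ᵥ v = 0} := by
  have hcxy_def : True := trivial
  set cxy := star xv ⬝ᵥ yv with hcxy
  set cyx := star yv ⬝ᵥ xv with hcyx
  -- action of Eq on vectors
  have hmv : ∀ v, Eq *ᵥ v
      = v - ((x : ℂ) * (star xv ⬝ᵥ v)) • xv - ((y : ℂ) * (star yv ⬝ᵥ v)) • yv := by
    intro v
    have h := congrArg (fun M => M *ᵥ v) hsum
    simp only [hE₀, hE₁, add_mulVec, smul_mulVec, vmv_mulVec, one_mulVec,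
      smul_smul] at h
    calc Eq *ᵥ v
        = (((x : ℂ) * (star xv ⬝ᵥ v)) • xv + ((y : ℂ) * (star yv ⬝ᵥ v)) • yv + Eq *ᵥ v)
          - ((x : ℂ) * (star xv ⬝ᵥ v)) • xv - ((y : ℂ) * (star yv ⬝ᵥ v)) • yv := by abel
      _ = v - ((x : ℂ) * (star xv ⬝ᵥ v)) • xv - ((y : ℂ) * (star yv ⬝ᵥ v)) • yv := by
          rw [h]
  -- kernel and span
  set K := LinearMap.ker Eq.mulVecLin with hK_def
  set S := Submodule.span ℂ ({xv, yv} : Set (Fin n → ℂ)) with hS_def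
  have hKS : K ≤ S := by
    intro v hv
    have hv0 : Eq *ᵥ v = 0 := hv
    have h := hmv v
    rw [hv0] at h
    replace h := h.symm
    rw [sub_sub, sub_eq_zero] at h
    rw [h]
    exact Submodule.add_mem _
      (Submodule.smul_mem _ _ (Submodule.subset_span (by simp)))
      (Submodule.smul_mem _ _ (Submodule.subset_span (by simp)))
  have hK2 : 2 ≤ Module.finrank ℂ K := by
    have hrn := LinearMap.finrank_range_add_finrank_ker Eq.mulVecLin
    rw [Module.finrank_fintype_fun_eq_card, Fintype.card_fin] at hrn
    have hrn' : Eq.rank + Module.finrank ℂ K = n := hrn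
    omega
  have hSle : Module.finrank ℂ S ≤ 2 := by
    have h : Module.finrank ℂ S ≤ ({xv, yv} : Set (Fin n → ℂ)).toFinset.card :=
      finrank_span_le_card _
    refine h.trans ?_
    classical
    rw [Set.toFinset_insert, Set.toFinset_singleton]
    exact (Finset.card_insert_le _ _).trans (by simp)
  have hKSeq : K = S := Submodule.eq_of_le_of_finrank_le hKS (hSle.trans hK2)
  have hxK : Eq *ᵥ xv = 0 := by
    have hm : xv ∈ S := Submodule.subset_span (by simp)
    rw [← hKSeq] at hm
    exact hm
  have hyK : Eq *ᵥ yv = 0 := by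
    have hm : yv ∈ S := Submodule.subset_span (by simp)
    rw [← hKSeq] at hm
    exact hm
  -- vector equations
  have hA : xv = ((x : ℂ)) • xv + ((y : ℂ) * cyx) • yv := by
    have h := hmv xv
    rw [hxK, hxv, mul_one] at h
    replace h := h.symm
    rwa [sub_sub, sub_eq_zero, ← hcyx] at h
  have hB : yv = ((x : ℂ) * cxy) • xv + ((y : ℂ)) • yv := by
    have h := hmv yv
    rw [hyK, hyv, mul_one] at h
    replace h := h.symm
    rwa [sub_sub, sub_eq_zero, ← hcxy] at h
  -- scalar equations from dotting
  have hA1 : (1 : ℂ) = x + y * cyx * cxy := by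
    have h := congrArg (fun v => star xv ⬝ᵥ v) hA
    simpa [dotProduct_add, dotProduct_smul, hxv, ← hcxy, smul_eq_mul,
      mul_assoc] using h
  have hA2 : cyx = (x : ℂ) * cyx + y * cyx := by
    have h := congrArg (fun v => star yv ⬝ᵥ v) hA
    simpa [dotProduct_add, dotProduct_smul, hyv, ← hcyx, smul_eq_mul,
      mul_assoc] using h
  have hB1 : (1 : ℂ) = x * cxy * cyx + y := by
    have h := congrArg (fun v => star yv ⬝ᵥ v) hB
    simpa [dotProduct_add, dotProduct_smul, hyv, ← hcyx, smul_eq_mul,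
      mul_assoc] using h
  have hB2 : cxy = (x : ℂ) * cxy + y * cxy := by
    have h := congrArg (fun v => star xv ⬝ᵥ v) hB
    simpa [dotProduct_add, dotProduct_smul, hxv, ← hcxy, smul_eq_mul,
      mul_assoc] using h
  have hyne : (y : ℂ) ≠ 0 := by
    simpa using Complex.ofReal_ne_zero.mpr hy.ne'
  -- main scalar conclusions
  obtain ⟨hx1, hy1, hc0, hc0'⟩ : x = 1 ∧ y = 1 ∧ cxy = 0 ∧ cyx = 0 := by
    by_cases hc : cyx = 0
    · have hx1 : (x : ℂ) = 1 := by rw [hc] at hA1; simpa using hA1.symm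
      have hy1 : (y : ℂ) = 1 := by
        rw [hc] at hB1; simp at hB1; linear_combination -hB1
      have hcxy0 : cxy = 0 := by
        rw [hx1, hy1, one_mul] at hB2
        linear_combination -hB2
      exact ⟨by exact_mod_cast hx1, by exact_mod_cast hy1, hcxy0, hc⟩
    · exfalso
      have hxy1 : (x : ℂ) + y = 1 := by
        have h : cyx * ((x : ℂ) + y - 1) = 0 := by linear_combination -hA2
        rcases mul_eq_zero.mp h with h | h
        · exact absurd h hc
        · linear_combination h
      have h5 : ((1 : ℂ) - x) • xv = ((y : ℂ) * cyx) • yv := by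
        rw [sub_smul, one_smul, sub_eq_iff_eq_add']
        exact hA
      rw [show ((1 : ℂ) - x) = (y : ℂ) by linear_combination -hxy1, ← smul_smul] at h5
      have hpar : xv = cyx • yv := smul_right_injective _ hyne h5
      have hle1 : S ≤ Submodule.span ℂ ({yv} : Set (Fin n → ℂ)) := by
        rw [hS_def, Submodule.span_le]
        intro a ha
        simp only [Set.mem_insert_iff, Set.mem_singleton_iff] at ha
        rcases ha with ha | ha
        · rw [ha, hpar]
          exact Submodule.smul_mem _ _ (Submodule.mem_span_singleton_self yv)
        · rw [ha]
          exact Submodule.mem_span_singleton_self yv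
      have hyv0 : yv ≠ 0 := by
        intro h0
        rw [h0] at hyv
        simp at hyv
      have hle2 : Module.finrank ℂ S ≤ 1 := by
        have := Submodule.finrank_mono hle1
        rwa [finrank_span_singleton hyv0] at this
      rw [← hKSeq] at hle2
      omega
  have hx1c : (x : ℂ) = 1 := by exact_mod_cast hx1
  have hy1c : (y : ℂ) = 1 := by exact_mod_cast hy1
  -- Eq as a matrix
  have hEqm : Eq = 1 - vecMulVec xv (star xv) - vecMulVec yv (star yv) := by
    rw [hx1c, one_smul] at hE₀
    rw [hy1c, one_smul] at hE₁
    rw [hE₀, hE₁] at hsum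
    calc Eq = (vecMulVec xv (star xv) + vecMulVec yv (star yv) + Eq)
          - vecMulVec xv (star xv) - vecMulVec yv (star yv) := by abel
      _ = 1 - vecMulVec xv (star xv) - vecMulVec yv (star yv) := by rw [hsum]
  have hyx0 : star yv ⬝ᵥ xv = 0 := hc0'
  have hxy0 : star xv ⬝ᵥ yv = 0 := hc0
  refine ⟨hx1, hy1, hc0, ?_, hEq.1, ?_⟩
  · -- idempotent
    rw [hEqm]
    simp only [sub_mul, mul_sub, one_mul, mul_one, vmv_mul_vmv, hxv, hyv,
      hxy0, hyx0, one_smul, zero_smul]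
    abel
  · -- range
    have hmv' : ∀ v, Eq *ᵥ v = v - (star xv ⬝ᵥ v) • xv - (star yv ⬝ᵥ v) • yv := by
      intro v
      rw [hmv v, hx1c, hy1c, one_mul, one_mul]
    ext v
    simp only [SetLike.mem_coe, LinearMap.mem_range, Set.mem_setOf_eq,
      mulVecLin_apply]
    constructor
    · rintro ⟨w, rfl⟩
      rw [hmv' w]
      constructor
      · simp [dotProduct_sub, dotProduct_smul, hxv, ← hcxy, hc0, smul_eq_mul]
      · simp [dotProduct_sub, dotProduct_smul, hyv, ← hcyx, hc0', smul_eq_mul]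
    · rintro ⟨h1v, h2v⟩
      exact ⟨v, by rw [hmv' v, h1v, h2v]; simp⟩
end
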